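/- For every integer x ≥ 0, a(x+1,0) − a(x,0) = (1/(2π)) · ∫₀^{2π} sin((x + 1/2)·θ) / √(14 − 2·cos θ) dθ. -/

import Mathlib

open intervalIntegral

/-- The potential kernel `a(x,y)` of the triangular lattice, defined by the double
integral `a(x,y) = (1/4π²) ∫∫ (1 - cos(xθ+yφ))/(6 - 2cosθ - 2cosφ - 2cos(θ+φ)) dθ dφ`. -/
noncomputable def triPot (x y : ℤ) : ℝ :=
  (1 / (4 * Real.pi ^ 2)) *
    ∫ θ in (0 : ℝ)..(2 * Real.pi), ∫ φ in (0 : ℝ)..(2 * Real.pi),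
      (1 - Real.cos ((x : ℝ) * θ + (y : ℝ) * φ)) /
        (6 - 2 * Real.cos θ - 2 * Real.cos φ - 2 * Real.cos (θ + φ))

namespace TriPotAux
open Real

lemma deriv_algebra (a b s cφ sφ : ℝ) (hs : 0 < s) (hs2 : s^2 = a^2 - b^2)
    (hsin : sφ^2 = 1 - cφ^2) (hD : 0 < a - b * cφ) (hV : 0 < a - b*cφ + s) :
    (a - b * cφ)⁻¹ =
      1 / s + 2 / s *
        (1 / (1 + (b * sφ / (a - b*cφ + s)) ^ 2) *
          ((b * cφ * (a - b*cφ + s) - b * sφ * (b * sφ)) / (a - b*cφ + s) ^ 2)) := by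
  have hVne : a - b*cφ + s ≠ 0 := ne_of_gt hV
  have hDne : a - b*cφ ≠ 0 := ne_of_gt hD
  have hsne : s ≠ 0 := ne_of_gt hs
  have h1 : 1 + (b * sφ / (a - b*cφ + s)) ^ 2 = 2*(a+s)*(a - b*cφ)/(a - b*cφ + s)^2 := by
    field_simp
    ring_nf
    linear_combination hs2 + (b^2) * hsin
  have h2 : b * cφ * (a - b*cφ + s) - b * sφ * (b * sφ) = b*cφ*(a+s) - b^2 := by
    linear_combination (-b^2) * hsin
  rw [h1, h2]
  have has : a + s ≠ 0 := by nlinarith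
  field_simp
  ring_nf
  linear_combination hs2

lemma poisson (a b : ℝ) (hb : |b| < a) :
    ∫ φ in (0:ℝ)..(2*π), (a - b * Real.cos φ)⁻¹ = 2*π / Real.sqrt (a^2 - b^2) := by
  have ha : 0 < a := lt_of_le_of_lt (abs_nonneg b) hb
  have hab : b^2 < a^2 := by nlinarith [abs_nonneg b, sq_abs b]
  set s : ℝ := Real.sqrt (a^2 - b^2) with hs_def
  have hs : 0 < s := Real.sqrt_pos.2 (by linarith)
  have hs2 : s^2 = a^2 - b^2 := Real.sq_sqrt (by linarith)
  have hD : ∀ φ : ℝ, 0 < a - b * Real.cos φ := by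
    intro φ
    have h1 : b * Real.cos φ ≤ |b| := by
      calc b * Real.cos φ ≤ |b * Real.cos φ| := le_abs_self _
        _ = |b| * |Real.cos φ| := abs_mul _ _
        _ ≤ |b| * 1 := mul_le_mul_of_nonneg_left (Real.abs_cos_le_one φ) (abs_nonneg b)
        _ = |b| := mul_one _
    linarith
  have hV : ∀ φ : ℝ, 0 < a - b * Real.cos φ + s := fun φ => by linarith [hD φ]
  set F : ℝ → ℝ := fun φ => φ/s + (2/s) * Real.arctan (b * Real.sin φ / (a - b * Real.cos φ + s)) with hF_def
  have hF : ∀ φ : ℝ, HasDerivAt F ((a - b * Real.cos φ)⁻¹) φ := by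
    intro φ
    have hVne : a - b * Real.cos φ + s ≠ 0 := ne_of_gt (hV φ)
    have hu : HasDerivAt (fun φ => b * Real.sin φ) (b * Real.cos φ) φ :=
      (Real.hasDerivAt_sin φ).const_mul b
    have hv : HasDerivAt (fun φ => a - b * Real.cos φ + s) (b * Real.sin φ) φ := by
      have := ((Real.hasDerivAt_cos φ).const_mul b).const_sub a
      simpa using this.add_const s
    have hw : HasDerivAt (fun φ => b * Real.sin φ / (a - b * Real.cos φ + s))
        ((b * Real.cos φ * (a - b * Real.cos φ + s) - b * Real.sin φ * (b * Real.sin φ)) /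
          (a - b * Real.cos φ + s)^2) φ := hu.div hv hVne
    have harc := (Real.hasDerivAt_arctan (b * Real.sin φ / (a - b * Real.cos φ + s))).comp φ hw
    have hid : HasDerivAt (fun φ : ℝ => φ/s) (1/s) φ := by
      simpa using (hasDerivAt_id φ).div_const s
    have := hid.add (harc.const_mul (2/s))
    refine this.congr_deriv ?_
    have hsin : Real.sin φ ^2 = 1 - Real.cos φ^2 := by
      have := Real.sin_sq_add_cos_sq φ; linarith
    exact (deriv_algebra a b s (Real.cos φ) (Real.sin φ) hs hs2 hsin (hD φ) (hV φ)).symm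
  have hcont : Continuous fun φ => (a - b * Real.cos φ)⁻¹ :=
    Continuous.inv₀ (by continuity) (fun φ => ne_of_gt (hD φ))
  rw [integral_eq_sub_of_hasDerivAt (fun φ _ => hF φ) (hcont.intervalIntegrable _ _)]
  simp [hF_def, Real.sin_two_pi, div_eq_mul_inv]

lemma inner_eval (θ : ℝ) (h0 : 0 < θ) (h2 : θ < 2*π) :
    ∫ φ in (0:ℝ)..(2*π), (6 - 2*Real.cos θ - 2*Real.cos φ - 2*Real.cos (θ+φ))⁻¹
      = π / Real.sqrt ((1 - Real.cos θ)*(7 - Real.cos θ)) := by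
  have hpi := Real.pi_pos
  set t := Real.cos (θ/2) with ht_def
  have ht1 : t < 1 := by
    have := Real.cos_lt_cos_of_nonneg_of_le_pi (le_refl 0) (by linarith : θ/2 ≤ π) (by linarith : 0 < θ/2)
    simpa using this
  have ht2 : -1 < t := by
    have := Real.cos_lt_cos_of_nonneg_of_le_pi (by linarith : (0:ℝ) ≤ θ/2) (le_refl π) (by linarith : θ/2 < π)
    simpa [Real.cos_pi] using this
  have hc : Real.cos θ = 2*t^2 - 1 := by
    have := Real.cos_two_mul (θ/2)
    rw [show 2*(θ/2) = θ by ring] at this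
    linarith
  set a : ℝ := 6 - 2*Real.cos θ with ha_def
  set b : ℝ := 4 * t with hb_def
  have hb : |b| < a := by
    rw [abs_lt]
    constructor <;> [nlinarith; nlinarith]
  have key : ∀ X h : ℝ, Real.cos (X-h) + Real.cos (X+h) = 2*Real.cos X*Real.cos h := by
    intro X h; rw [Real.cos_sub, Real.cos_add]; ring
  have hrw : ∀ φ : ℝ, 6 - 2*Real.cos θ - 2*Real.cos φ - 2*Real.cos (θ+φ)
      = a - b * Real.cos (φ + θ/2) := by
    intro φ
    have h := key (φ+θ/2) (θ/2)
    rw [show φ+θ/2-θ/2 = φ by ring, show φ+θ/2+θ/2 = θ+φ by ring] at h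
    rw [ha_def, hb_def]
    linarith
  have hshift : (∫ φ in (0:ℝ)..(2*π), (a - b * Real.cos (φ + θ/2))⁻¹)
      = ∫ u in (0:ℝ)..(2*π), (a - b * Real.cos u)⁻¹ := by
    rw [integral_comp_add_right (fun u => (a - b * Real.cos u)⁻¹) (θ/2)]
    have hper : Function.Periodic (fun u => (a - b * Real.cos u)⁻¹) (2*π) := by
      intro u; simp [Real.cos_add_two_pi]
    have := hper.intervalIntegral_add_eq (θ/2) 0
    simpa [add_comm, zero_add] using this
  calc ∫ φ in (0:ℝ)..(2*π), (6 - 2*Real.cos θ - 2*Real.cos φ - 2*Real.cos (θ+φ))⁻¹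
      = ∫ φ in (0:ℝ)..(2*π), (a - b * Real.cos (φ + θ/2))⁻¹ := by
        apply intervalIntegral.integral_congr
        intro φ _; simp only [hrw φ]
    _ = ∫ u in (0:ℝ)..(2*π), (a - b * Real.cos u)⁻¹ := hshift
    _ = 2*π / Real.sqrt (a^2 - b^2) := poisson a b hb
    _ = π / Real.sqrt ((1 - Real.cos θ)*(7 - Real.cos θ)) := by
        have h4 : a^2 - b^2 = 4*((1 - Real.cos θ)*(7 - Real.cos θ)) := by
          rw [ha_def, hb_def, hc]; ring
        rw [h4, show (4:ℝ)*((1 - Real.cos θ)*(7 - Real.cos θ)) = 2^2*((1 - Real.cos θ)*(7 - Real.cos θ)) by norm_num,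
          Real.sqrt_mul (by positivity) _, Real.sqrt_sq (by norm_num : (0:ℝ) ≤ 2)]
        have hX : (0:ℝ) < Real.sqrt ((1 - Real.cos θ)*(7 - Real.cos θ)) := by
          apply Real.sqrt_pos.2
          have hsp := Real.sin_pos_of_pos_of_lt_pi (show (0:ℝ) < θ/2 by linarith) (by linarith : θ/2 < π)
          have hsc := Real.sin_sq_add_cos_sq (θ/2)
          nlinarith [hsp, hsc, hc]
        field_simp

lemma sin_cos_nat_bound (x : ℝ) : ∀ n : ℕ,
    |Real.sin (n * x)| ≤ n * |Real.sin x| ∧ 1 - Real.cos (n * x) ≤ n^2 * (1 - Real.cos x) := by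
  intro n
  induction n with
  | zero => simp
  | succ n ih =>
    obtain ⟨hs, hc⟩ := ih
    have hx1 := Real.neg_one_le_cos x
    have hx2 := Real.cos_le_one x
    have hnx1 := Real.neg_one_le_cos ((n:ℝ) * x)
    have hnx2 := Real.cos_le_one ((n:ℝ) * x)
    have hexp : ((n:ℝ)+1) * x = (n:ℝ)*x + x := by ring
    constructor
    · push_cast
      rw [hexp, Real.sin_add]
      calc |Real.sin ((n:ℝ)*x) * Real.cos x + Real.cos ((n:ℝ)*x) * Real.sin x|
          ≤ |Real.sin ((n:ℝ)*x) * Real.cos x| + |Real.cos ((n:ℝ)*x) * Real.sin x| := abs_add_le _ _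
        _ ≤ |Real.sin ((n:ℝ)*x)| * 1 + 1 * |Real.sin x| := by
            rw [abs_mul, abs_mul]
            gcongr <;> [exact Real.abs_cos_le_one x; exact Real.abs_cos_le_one _]
        _ ≤ (n:ℝ) * |Real.sin x| + 1 * |Real.sin x| := by
            rw [mul_one]; gcongr
        _ = ((n:ℝ)+1) * |Real.sin x| := by ring
    · push_cast
      rw [hexp, Real.cos_add]
      have habs : Real.sin ((n:ℝ)*x) * Real.sin x ≤ (n:ℝ) * |Real.sin x| * |Real.sin x| := by
        calc Real.sin ((n:ℝ)*x) * Real.sin x ≤ |Real.sin ((n:ℝ)*x) * Real.sin x| := le_abs_self _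
          _ = |Real.sin ((n:ℝ)*x)| * |Real.sin x| := abs_mul _ _
          _ ≤ (n:ℝ) * |Real.sin x| * |Real.sin x| := by gcongr
      have hsin2 : |Real.sin x| * |Real.sin x| = 1 - Real.cos x^2 := by
        rw [← abs_mul, ← sq, abs_of_nonneg (sq_nonneg _)]
        nlinarith [Real.sin_sq_add_cos_sq x]
      nlinarith [habs, hsin2, hc,
        mul_nonneg (sub_nonneg.2 hnx2) (sub_nonneg.2 hx2),
        mul_nonneg (Nat.cast_nonneg n : (0:ℝ) ≤ n) (sq_nonneg (1 - Real.cos x))]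

lemma g_abs_le (k : ℕ) (θ : ℝ) :
    |(1 - Real.cos (k*θ)) * (π / Real.sqrt ((1-Real.cos θ)*(7-Real.cos θ)))| ≤ π * k^2 := by
  have hpi := Real.pi_pos
  have hc1 := Real.cos_le_one θ
  have hc2 := Real.neg_one_le_cos θ
  rcases eq_or_lt_of_le (sub_nonneg.2 hc1) with h | h
  · rw [← h]
    simp [Real.sqrt_zero]
    positivity
  · have h7 : (6:ℝ) ≤ 7 - Real.cos θ := by linarith
    have hS : 0 < Real.sqrt ((1-Real.cos θ)*(7-Real.cos θ)) := Real.sqrt_pos.2 (by nlinarith)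
    have hN0 : 0 ≤ 1 - Real.cos (k*θ) := by linarith [Real.cos_le_one ((k:ℝ)*θ)]
    have hN : 1 - Real.cos ((k:ℝ)*θ) ≤ k^2 * (1 - Real.cos θ) := (sin_cos_nat_bound θ k).2
    rw [abs_of_nonneg (by positivity)]
    have hS6 : Real.sqrt (6*(1-Real.cos θ)) ≤ Real.sqrt ((1-Real.cos θ)*(7-Real.cos θ)) := by
      apply Real.sqrt_le_sqrt; nlinarith
    have hS6pos : 0 < Real.sqrt (6*(1-Real.cos θ)) := Real.sqrt_pos.2 (by nlinarith)
    calc (1 - Real.cos ((k:ℝ)*θ)) * (π / Real.sqrt ((1-Real.cos θ)*(7-Real.cos θ)))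
        ≤ (k^2 * (1 - Real.cos θ)) * (π / Real.sqrt (6*(1-Real.cos θ))) := by
          apply mul_le_mul hN _ (by positivity) (by positivity)
          exact div_le_div_of_nonneg_left (le_of_lt hpi) hS6pos hS6
      _ ≤ π * k^2 := by
          rw [show (k^2 : ℝ) * (1 - Real.cos θ) * (π / Real.sqrt (6*(1-Real.cos θ)))
              = π * k^2 * ((1 - Real.cos θ) / Real.sqrt (6*(1-Real.cos θ))) by ring]
          have hle1 : (1 - Real.cos θ) / Real.sqrt (6*(1-Real.cos θ)) ≤ 1 := by
            rw [div_le_one hS6pos]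
            apply Real.le_sqrt_of_sq_le
            nlinarith
          nlinarith [mul_le_mul_of_nonneg_left hle1 (show (0:ℝ) ≤ π * (k:ℝ)^2 by positivity)]

lemma g_int (k : ℕ) :
    IntervalIntegrable
      (fun θ => (1 - Real.cos (k*θ)) * (π / Real.sqrt ((1-Real.cos θ)*(7-Real.cos θ))))
      MeasureTheory.volume 0 (2*π) := by
  apply IntervalIntegrable.mono_fun' (_root_.intervalIntegrable_const (c := π * (k:ℝ)^2))
  · apply Measurable.aestronglyMeasurable
    fun_prop
  · filter_upwards with θ
    exact g_abs_le k θ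

lemma pot_eq (k : ℕ) : triPot (k : ℤ) 0 = (1/(4*π^2)) *
    ∫ θ in (0:ℝ)..(2*π),
      (1 - Real.cos (k*θ)) * (π / Real.sqrt ((1-Real.cos θ)*(7-Real.cos θ))) := by
  have hpi := Real.pi_pos
  unfold triPot
  congr 1
  apply intervalIntegral.integral_congr
  intro θ hθ
  rw [Set.uIcc_of_le (by positivity)] at hθ
  simp only [Int.cast_natCast, Int.cast_zero, zero_mul, add_zero]
  rcases eq_or_lt_of_le hθ.1 with h0 | h0
  · subst h0
    simp
  rcases eq_or_lt_of_le hθ.2 with h2 | h2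
  · subst h2
    simp [Real.cos_nat_mul_two_pi]
  · simp only [div_eq_mul_inv]
    rw [intervalIntegral.integral_const_mul, inner_eval θ h0 h2, div_eq_mul_inv]

end TriPotAux

open TriPotAux Real

/-- Increments of the triangular-lattice potential kernel along the `x`-axis:
`a(x+1,0) - a(x,0) = (1/2π) ∫₀^{2π} sin((x+1/2)θ)/√(14 - 2cosθ) dθ`. -/
theorem triPot_axis_increment :
    ∀ x : ℕ, triPot ((x : ℤ) + 1) 0 - triPot (x : ℤ) 0 =
      (1 / (2 * Real.pi)) *
        ∫ θ in (0 : ℝ)..(2 * Real.pi),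
          Real.sin (((x : ℝ) + 1 / 2) * θ) / Real.sqrt (14 - 2 * Real.cos θ) := by

  intro x
  have hpi := Real.pi_pos
  have e1 : ((x : ℤ) + 1) = ((x + 1 : ℕ) : ℤ) := by push_cast; ring
  rw [e1, pot_eq (x+1), pot_eq x, ← mul_sub,
    ← intervalIntegral.integral_sub (g_int (x+1)) (g_int x)]
  have hcongr : (∫ θ in (0:ℝ)..(2*π),
      ((1 - Real.cos ((x+1 : ℕ)*θ)) * (π / Real.sqrt ((1-Real.cos θ)*(7-Real.cos θ)))
        - (1 - Real.cos (x*θ)) * (π / Real.sqrt ((1-Real.cos θ)*(7-Real.cos θ)))))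
      = ∫ θ in (0:ℝ)..(2*π),
          2*π * (Real.sin (((x : ℝ) + 1 / 2) * θ) / Real.sqrt (14 - 2 * Real.cos θ)) := by
    apply intervalIntegral.integral_congr
    intro θ hθ
    rw [Set.uIcc_of_le (by positivity)] at hθ
    have h14 : (0:ℝ) < 14 - 2*Real.cos θ := by linarith [Real.cos_le_one θ]
    have hsqrt14 : Real.sqrt (14 - 2*Real.cos θ) ≠ 0 := ne_of_gt (Real.sqrt_pos.2 h14)
    rcases eq_or_lt_of_le hθ.1 with h0 | h0
    · subst h0
      simp
    rcases eq_or_lt_of_le hθ.2 with h2 | h2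
    · subst h2
      have hx1 : Real.cos ((x+1 : ℕ)*(2*π)) = 1 := Real.cos_nat_mul_two_pi (x+1)
      have hx0 : Real.cos ((x : ℕ)*(2*π)) = 1 := Real.cos_nat_mul_two_pi x
      have hsin : Real.sin (((x : ℝ) + 1/2) * (2*π)) = 0 := by
        rw [show ((x : ℝ) + 1/2) * (2*π) = (x:ℝ)*(2*π) + π by ring, Real.sin_add_pi,
          show (x:ℝ)*(2*π) = ((2*x : ℕ) : ℝ) * π by push_cast; ring, Real.sin_nat_mul_pi]
        ring
      dsimp only
      rw [hx1, hx0, hsin]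
      simp
    · have hsp : 0 < Real.sin (θ/2) :=
        Real.sin_pos_of_pos_of_lt_pi (by linarith) (by linarith)
      have hsp2 : Real.sin (θ/2)^2 = (1 - Real.cos θ)/2 := by
        have := Real.sin_sq_eq_half_sub (θ/2)
        rw [show 2*(θ/2) = θ by ring] at this
        linarith
      have hSeq : Real.sqrt ((1-Real.cos θ)*(7-Real.cos θ))
          = Real.sin (θ/2) * Real.sqrt (14 - 2*Real.cos θ) := by
        rw [show (1-Real.cos θ)*(7-Real.cos θ)
            = Real.sin (θ/2)^2 * (14 - 2*Real.cos θ) by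
          linear_combination (-(14 - 2*Real.cos θ))*hsp2]
        rw [Real.sqrt_mul (sq_nonneg _), Real.sqrt_sq hsp.le]
      have hcc : Real.cos ((x:ℝ)*θ) - Real.cos (((x:ℝ)+1)*θ)
          = 2 * Real.sin (((x:ℝ)+1/2)*θ) * Real.sin (θ/2) := by
        have h := Real.cos_sub_cos ((x:ℝ)*θ) (((x:ℝ)+1)*θ)
        rw [show ((x:ℝ)*θ + ((x:ℝ)+1)*θ)/2 = ((x:ℝ)+1/2)*θ by ring,
            show ((x:ℝ)*θ - ((x:ℝ)+1)*θ)/2 = -(θ/2) by ring, Real.sin_neg] at h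
        linarith
      have hcast : ((x+1 : ℕ) : ℝ) = (x:ℝ)+1 := by push_cast; ring
      dsimp only
      rw [hcast, hSeq, ← sub_mul, show (1 - Real.cos (((x:ℝ)+1)*θ)) - (1 - Real.cos ((x:ℝ)*θ))
          = Real.cos ((x:ℝ)*θ) - Real.cos (((x:ℝ)+1)*θ) by ring, hcc]
      field_simp
  rw [hcongr, intervalIntegral.integral_const_mul]
  rw [show (1/(4*π^2)) * (2*π * ∫ θ in (0:ℝ)..(2*π),
      Real.sin (((x : ℝ) + 1 / 2) * θ) / Real.sqrt (14 - 2 * Real.cos θ))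
    = (1/(2*π)) * ∫ θ in (0:ℝ)..(2*π),
      Real.sin (((x : ℝ) + 1 / 2) * θ) / Real.sqrt (14 - 2 * Real.cos θ) by
    field_simp; ring]
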